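/- Fix an integer l ≥ 0 and let f ∈ C^l([0,1]). Then the series Σ_{a=1}^∞ (a+x)^{−2} f(1/(a+x)) and Σ_{a=1}^∞ (a+x)^{−2} f(1 − 1/(a+x)) converge uniformly on [0,1]; their sums L₀f and L₁f belong to C^l([0,1]); and for every 0 ≤ i ≤ l the i-th derivatives are obtained by termwise differentiation: (L₀f)^{(i)}(x) = Σ_{a=1}^∞ (d/dx)^i[(a+x)^{−2} f(1/(a+x))] and (L₁f)^{(i)}(x) = Σ_{a=1}^∞ (d/dx)^i[(a+x)^{−2} f(1 − 1/(a+x))], both series converging uniformly on [0,1]. -/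

import Mathlib

open Filter Topology

open Set

local notation "U" => Set.Ioo (-(1:ℝ)/2) 2
local notation "K" => Set.Icc (0:ℝ) 1


lemma exists_extension : ∀ (l : ℕ) (f : ℝ → ℝ), ContDiffOn ℝ l f (Set.Icc (0:ℝ) 1) →
    ∃ F : ℝ → ℝ, ContDiff ℝ l F ∧ Set.EqOn F f (Set.Icc (0:ℝ) 1) := by
  intro l
  induction l with
  | zero =>
    intro f hf
    refine ⟨fun x => f (max 0 (min 1 x)), ?_, ?_⟩
    · rw [Nat.cast_zero, contDiff_zero]
      apply (hf.continuousOn).comp_continuous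
        (continuous_const.max (continuous_const.min continuous_id))
      intro x
      constructor
      · exact le_max_left _ _
      · simp only [max_le_iff]
        constructor
        · norm_num
        · exact min_le_left _ _
    · intro x hx
      simp only [min_eq_right hx.2, max_eq_right hx.1]
  | succ l IH =>
    intro f hf
    have hK : UniqueDiffOn ℝ (Set.Icc (0:ℝ) 1) := uniqueDiffOn_Icc (by norm_num)
    have hcast : ((l+1 : ℕ) : WithTop ℕ∞) = (l : WithTop ℕ∞) + 1 := by push_cast; rfl
    have hg : ContDiffOn ℝ l (derivWithin f (Set.Icc (0:ℝ) 1)) (Set.Icc (0:ℝ) 1) :=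
      hf.derivWithin hK (by rw [hcast])
    obtain ⟨G, hG, hGg⟩ := IH _ hg
    refine ⟨fun x => f 0 + ∫ t in (0:ℝ)..x, G t, ?_, ?_⟩
    · have hF' : ∀ x : ℝ, HasDerivAt (fun x => f 0 + ∫ t in (0:ℝ)..x, G t) (G x) x := by
        intro x
        exact ((hG.continuous.integral_hasStrictDerivAt 0 x).hasDerivAt).const_add _
      rw [hcast, contDiff_succ_iff_deriv]
      refine ⟨fun x => (hF' x).differentiableAt, ?_, ?_⟩
      · intro h; exact absurd h (by simp)
      · have : deriv (fun x => f 0 + ∫ t in (0:ℝ)..x, G t) = G := by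
          funext x; exact (hF' x).deriv
        rw [this]; exact hG
    · intro x hx
      have hint : ∫ t in (0:ℝ)..x, G t = f x - f 0 := by
        apply intervalIntegral.integral_eq_sub_of_hasDeriv_right_of_le hx.1
        · exact hf.continuousOn.mono (Set.Icc_subset_Icc le_rfl hx.2)
        · intro t ht
          have htK : t ∈ Set.Ioo (0:ℝ) 1 := ⟨ht.1, lt_of_lt_of_le ht.2 hx.2⟩
          have hmem : Set.Icc (0:ℝ) 1 ∈ 𝓝 t := Icc_mem_nhds htK.1 htK.2
          have hd : DifferentiableWithinAt ℝ f (Set.Icc (0:ℝ) 1) t :=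
            (hf t (Set.mem_Icc_of_Ioo htK)).differentiableWithinAt (by
              rw [hcast]; exact_mod_cast Nat.succ_ne_zero l)
          have := (hd.hasDerivWithinAt.hasDerivAt hmem)
          rw [← hGg (Set.mem_Icc_of_Ioo htK)] at this
          exact this.hasDerivWithinAt
        · exact hG.continuous.intervalIntegrable _ _
      show f 0 + (∫ t in (0:ℝ)..x, G t) = f x
      rw [hint]; ring



lemma hUopen : IsOpen U := isOpen_Ioo
lemma hUu : UniqueDiffOn ℝ U := hUopen.uniqueDiffOn
lemma hKU : K ⊆ U := fun x hx => ⟨by linarith [hx.1], by linarith [hx.2]⟩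
lemma hKu : UniqueDiffOn ℝ K := uniqueDiffOn_Icc (by norm_num)

lemma base_summable : Summable (fun a : ℕ => (((a:ℝ)+1)^2)⁻¹) := by
  have h := Real.summable_one_div_nat_pow.mpr (one_lt_two)
  have h2 := (_root_.summable_nat_add_iff 1).mpr h
  apply h2.congr
  intro n
  push_cast
  rw [one_div]

lemma bound_summable (M : ℝ) : Summable (fun a : ℕ => M / ((a:ℝ)+1)^2) := by
  simpa [div_eq_mul_inv] using base_summable.mul_left M

/-- Term-by-term differentiation and smoothness of a series on the open set U. -/
lemma keyInd : ∀ (n : ℕ) (h : ℕ → ℕ → ℝ → ℝ) (M : ℕ → ℝ),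
    (∀ i, i ≤ n → ∀ (a : ℕ), ∀ y ∈ U, ‖h i a y‖ ≤ M i / ((a:ℝ)+1)^2) →
    (∀ i, i < n → ∀ (a : ℕ), ∀ y ∈ U, HasDerivAt (h i a) (h (i+1) a y) y) →
    (∀ i, i ≤ n → ∀ (a : ℕ), ContinuousOn (h i a) U) →
    ContDiffOn ℝ n (fun y => ∑' a, h 0 a y) U ∧
    ∀ i, i ≤ n → ∀ y ∈ U, iteratedDerivWithin i (fun y => ∑' a, h 0 a y) U y = ∑' a, h i a y := by
  intro n
  induction n with
  | zero =>
    intro h M hb _ hc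
    constructor
    · rw [Nat.cast_zero, contDiffOn_zero]
      apply (tendstoUniformlyOn_tsum_nat (bound_summable (M 0))
        (fun a x hx => hb 0 le_rfl a x hx)).continuousOn
      exact (Filter.Eventually.of_forall fun N =>
        continuousOn_finset_sum _ (fun a _ => hc 0 le_rfl a)).frequently
    · intro i hi y hy
      interval_cases i
      simp
  | succ n IH =>
    intro h M hb hd hc
    have h0U : (0:ℝ) ∈ U := by constructor <;> norm_num
    obtain ⟨IH1, IH2⟩ := IH (fun i => h (i+1)) (fun i => M (i+1))
      (fun i hi a y hy => hb (i+1) (by omega) a y hy)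
      (fun i hi a y hy => hd (i+1) (by omega) a y hy)
      (fun i hi a => hc (i+1) (by omega) a)
    have hder : ∀ y ∈ U, HasDerivAt (fun z => ∑' a, h 0 a z) (∑' a, h 1 a y) y := by
      intro y hy
      exact hasDerivAt_tsum_of_isPreconnected (bound_summable (M 1)) hUopen
        (isPreconnected_Ioo) (fun a z hz => hd 0 (by omega) a z hz)
        (fun a z hz => hb 1 (by omega) a z hz) h0U
        (Summable.of_norm_bounded (bound_summable (M 0)) (fun a => hb 0 (by omega) a 0 h0U)) hy
    have hdw : ∀ y ∈ U, derivWithin (fun z => ∑' a, h 0 a z) U y = ∑' a, h 1 a y :=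
      fun y hy => ((hder y hy).hasDerivWithinAt).derivWithin (hUu y hy)
    have hdiff : DifferentiableOn ℝ (fun z => ∑' a, h 0 a z) U :=
      fun y hy => ((hder y hy).differentiableAt).differentiableWithinAt
    constructor
    · rw [show ((n+1 : ℕ) : WithTop ℕ∞) = (n : WithTop ℕ∞) + 1 by push_cast; rfl,
        contDiffOn_succ_iff_derivWithin hUu]
      refine ⟨hdiff, fun hω => absurd hω (by simp), ?_⟩
      exact IH1.congr (fun y hy => hdw y hy)
    · intro i hi y hy
      match i with
      | 0 => simp
      | (j+1) =>
        rw [iteratedDerivWithin_succ']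
        rw [iteratedDerivWithin_congr (fun y hy => hdw y hy) hy]
        exact IH2 j (by omega) y hy

/-- iterated derivatives within K agree with those within U for C^n functions on U. -/
lemma shrink {g : ℝ → ℝ} {n : ℕ} (hg : ContDiffOn ℝ n g U) :
    ∀ i, i ≤ n → ∀ x ∈ K, iteratedDerivWithin i g K x = iteratedDerivWithin i g U x := by
  intro i
  induction i with
  | zero => intro _ x hx; simp
  | succ i IH =>
    intro hi x hx
    have hIH := IH (by omega)
    rw [iteratedDerivWithin_succ]
    rw [derivWithin_congr (fun y hy => hIH y hy) (hIH x hx)]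
    have hdiff : DifferentiableWithinAt ℝ (iteratedDerivWithin i g U) U x :=
      hg.differentiableOn_iteratedDerivWithin (by exact_mod_cast hi) hUu x (hKU hx)
    have h1 := (hdiff.hasDerivWithinAt.mono hKU).derivWithin (hKu x hx)
    rw [h1, ← iteratedDerivWithin_succ]

lemma cy_pos {c y : ℝ} (hc : 1 ≤ c) (hy : y ∈ U) : (1:ℝ)/2 < c + y := by
  have := hy.1; linarith

lemma cy_ge {a : ℕ} {y : ℝ} (hy : y ∈ U) : ((a:ℝ)+1)/2 ≤ (a:ℝ)+1+y := by
  have h1 := hy.1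
  have h2 : (0:ℝ) ≤ a := Nat.cast_nonneg a
  linarith

lemma iter_inv (c : ℝ) (hc : 1 ≤ c) : ∀ i : ℕ, ∀ y ∈ U,
    iteratedDerivWithin i (fun y => (c+y)⁻¹) U y
      = (-1)^i * (i.factorial : ℝ) * (c+y)^(-1-(i:ℤ)) := by
  intro i
  induction i with
  | zero =>
    intro y hy
    simp [zpow_neg_one]
  | succ i IH =>
    intro y hy
    have hpos : (0:ℝ) < c + y := lt_trans (by norm_num) (cy_pos hc hy)
    rw [iteratedDerivWithin_succ]
    rw [derivWithin_congr IH (IH y hy)]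
    rw [derivWithin_of_isOpen hUopen hy]
    have h1 : HasDerivAt (fun y : ℝ => (c+y)^(-1-(i:ℤ))) (((-1-(i:ℤ) : ℤ) : ℝ) * (c+y)^(-1-(i:ℤ)-1)) y := by
      exact (HasDerivAt.comp y (hasDerivAt_zpow (-1-(i:ℤ)) (c+y) (Or.inl hpos.ne'))
        ((hasDerivAt_id y).const_add c)).congr_deriv (by simp)
    have h2 := h1.const_mul ((-1)^i * (i.factorial : ℝ))
    rw [h2.deriv]
    have he : (-1-(i:ℤ))-1 = -1-((i:ℕ)+1:ℕ) := by push_cast; ring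
    rw [he]
    rw [Nat.factorial_succ]
    push_cast
    ring




section Bounds

variable {l : ℕ} {G : ℝ → ℝ}

/-- `u a` maps `U` into `(0, 2]`-ish window with size `2/(a+1)`. -/
lemma u_pos {a : ℕ} {y : ℝ} (hy : y ∈ U) : 0 < (((a:ℝ)+1+y))⁻¹ := by
  have : (0:ℝ) < (a:ℝ)+1+y := lt_trans (by norm_num) (cy_pos (by simp [Nat.cast_nonneg]) hy)
  positivity

lemma u_ne {a : ℕ} {y : ℝ} (hy : y ∈ U) : ((a:ℝ)+1+y) ≠ 0 := by
  have : (0:ℝ) < (a:ℝ)+1+y := lt_trans (by norm_num) (cy_pos (by simp [Nat.cast_nonneg]) hy)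
  exact this.ne'

lemma u_le {a : ℕ} {y : ℝ} (hy : y ∈ U) : (((a:ℝ)+1+y))⁻¹ ≤ 2/((a:ℝ)+1) := by
  rw [inv_eq_one_div, div_le_div_iff₀ (lt_trans (by norm_num) (cy_pos (by simp [Nat.cast_nonneg]) hy))
    (by positivity)]
  have := cy_ge (a := a) hy
  linarith

lemma u_mem {a : ℕ} {y : ℝ} (hy : y ∈ U) : (((a:ℝ)+1+y))⁻¹ ∈ Set.Icc (0:ℝ) 2 := by
  refine ⟨(u_pos hy).le, (u_le hy).trans ?_⟩
  rw [div_le_iff₀ (by positivity)]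
  have : (0:ℝ) ≤ a := Nat.cast_nonneg a
  linarith

/-- Smoothness of each term on U. -/
lemma hTc (hG : ContDiff ℝ l G) (a : ℕ) :
    ContDiffOn ℝ l (fun y => ((((a:ℝ)+1+y))⁻¹)^2 * G ((((a:ℝ)+1+y))⁻¹)) U := by
  have huc : ContDiffOn ℝ l (fun y : ℝ => (((a:ℝ)+1+y))⁻¹) U :=
    ((contDiff_const.add contDiff_id).contDiffOn).inv (fun y hy => u_ne hy)
  have hg : ContDiff ℝ l (fun z : ℝ => z^2 * G z) :=
    (contDiff_id.pow 2).mul hG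
  exact hg.comp_contDiffOn huc

/-- There is a uniform constant bounding all relevant derivatives of `g := z^2 * G z` on `[0,2]`. -/
lemma exists_C (hG : ContDiff ℝ l G) : ∃ C : ℝ, 0 ≤ C ∧
    (∀ j, j ≤ l → ∀ z ∈ Set.Icc (0:ℝ) 2, ‖iteratedFDeriv ℝ j (fun z : ℝ => z^2 * G z) z‖ ≤ C) ∧
    (∀ z ∈ Set.Icc (0:ℝ) 2, ‖G z‖ ≤ C) := by
  have hg : ContDiff ℝ l (fun z : ℝ => z^2 * G z) := (contDiff_id.pow 2).mul hG
  have hjc : ∀ j : ℕ, ∃ C, 0 ≤ C ∧ (j ≤ l → ∀ z ∈ Set.Icc (0:ℝ) 2,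
      ‖iteratedFDeriv ℝ j (fun z : ℝ => z^2 * G z) z‖ ≤ C) := by
    intro j
    by_cases hj : j ≤ l
    · obtain ⟨C, hC⟩ := isCompact_Icc.exists_bound_of_continuousOn
        ((hg.continuous_iteratedFDeriv (by exact_mod_cast hj)).continuousOn
          (s := Set.Icc (0:ℝ) 2))
      exact ⟨max C 0, le_max_right _ _, fun _ z hz => (hC z hz).trans (le_max_left _ _)⟩
    · exact ⟨0, le_rfl, fun h => absurd h hj⟩
  choose Cf hCf0 hCf using hjc
  obtain ⟨CG, hCG⟩ := isCompact_Icc.exists_bound_of_continuousOn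
    (hG.continuous.continuousOn (s := Set.Icc (0:ℝ) 2))
  refine ⟨max (∑ j ∈ Finset.range (l+1), Cf j) (max CG 0), le_trans (le_max_right _ _) (le_max_right _ _), ?_, ?_⟩
  · intro j hj z hz
    refine le_trans (hCf j hj z hz) (le_trans ?_ (le_max_left _ _))
    exact Finset.single_le_sum (fun k _ => hCf0 k) (Finset.mem_range.mpr (by omega))
  · intro z hz
    exact le_trans (hCG z hz) (le_trans (le_max_left _ _) (le_max_right _ _))

end Bounds

section Bounds2

variable {l : ℕ} {G : ℝ → ℝ}

lemma uD {a : ℕ} {y : ℝ} (hy : y ∈ U) {j l : ℕ} (hj1 : 1 ≤ j) (hjl : j ≤ l) :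
    ‖iteratedFDerivWithin ℝ j (fun y : ℝ => (((a:ℝ)+1+y))⁻¹) U y‖
      ≤ ((l.factorial : ℝ) * 2^(l+1) / ((a:ℝ)+1))^j := by
  set c : ℝ := (a:ℝ)+1 with hc
  have hc1 : (1:ℝ) ≤ c := by simp [hc, Nat.cast_nonneg]
  have hcy : (0:ℝ) < c + y := lt_trans (by norm_num) (cy_pos hc1 hy)
  have hge : c/2 ≤ c + y := by have := cy_ge (a := a) hy; linarith
  have hcpos : (0:ℝ) < c := by linarith
  rw [norm_iteratedFDerivWithin_eq_norm_iteratedDerivWithin, iter_inv c hc1 j y hy]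
  have hz : (c+y)^(-1-(j:ℤ)) = ((c+y)^(j+1))⁻¹ := by
    rw [show (-1-(j:ℤ)) = -((j+1 : ℕ) : ℤ) by push_cast; ring, zpow_neg, zpow_natCast]
  rw [hz]
  have habs : ‖(-1:ℝ)^j * (j.factorial : ℝ) * ((c+y)^(j+1))⁻¹‖
      = (j.factorial : ℝ) * ((c+y)^(j+1))⁻¹ := by
    rw [norm_mul, norm_mul, norm_pow, norm_neg, norm_one, one_pow, one_mul,
      Real.norm_natCast, norm_inv, norm_pow, Real.norm_eq_abs, abs_of_pos hcy]
  rw [habs]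
  have h1 : ((c+y)^(j+1))⁻¹ ≤ (2:ℝ)^(j+1) / c^(j+1) := by
    rw [inv_eq_one_div, div_le_div_iff₀ (by positivity) (by positivity)]
    calc (1:ℝ) * c^(j+1) = c^(j+1) := by ring
    _ = ((c/2) * 2)^(j+1) := by norm_num
    _ = (c/2)^(j+1) * 2^(j+1) := by rw [mul_pow]
    _ ≤ (c+y)^(j+1) * 2^(j+1) := by
        apply mul_le_mul_of_nonneg_right _ (by positivity)
        exact pow_le_pow_left₀ (by positivity) hge _
    _ = 2^(j+1) * (c+y)^(j+1) := by ring
  have h2 : (j.factorial : ℝ) * ((c+y)^(j+1))⁻¹ ≤ (j.factorial : ℝ) * ((2:ℝ)^(j+1) / c^(j+1)) :=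
    mul_le_mul_of_nonneg_left h1 (by positivity)
  refine h2.trans ?_
  rw [div_pow]
  have e1 : (j.factorial : ℝ) * 2^(j+1) ≤ (l.factorial : ℝ) * 2^(l+1) := by
    apply mul_le_mul _ (pow_le_pow_right₀ one_le_two (by omega)) (by positivity) (by positivity)
    exact_mod_cast Nat.factorial_le hjl
  have hc₀1 : (1:ℝ) ≤ (l.factorial : ℝ) * 2^(l+1) := by
    have : (1:ℝ) ≤ (l.factorial : ℝ) := by exact_mod_cast l.factorial_pos
    nlinarith [pow_le_pow_right₀ (one_le_two (α := ℝ)) (show 1 ≤ l+1 by omega)]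
  have e2 : (l.factorial : ℝ) * 2^(l+1) ≤ ((l.factorial : ℝ) * 2^(l+1))^j :=
    le_self_pow₀ hc₀1 (by omega)
  have e3 : c^j ≤ c^(j+1) := pow_le_pow_right₀ hc1 (by omega)
  calc (j.factorial : ℝ) * ((2:ℝ)^(j+1) / c^(j+1))
      = ((j.factorial : ℝ) * 2^(j+1)) / c^(j+1) := by ring
    _ ≤ ((l.factorial : ℝ) * 2^(l+1))^j / c^j :=
        div_le_div₀ (by positivity) (e1.trans e2) (by positivity) e3

lemma boundLemma (hG : ContDiff ℝ l G) : ∀ i, i ≤ l → ∃ M : ℝ, ∀ (a : ℕ), ∀ y ∈ U,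
    ‖iteratedDerivWithin i (fun y => ((((a:ℝ)+1+y))⁻¹)^2 * G ((((a:ℝ)+1+y))⁻¹)) U y‖
      ≤ M / ((a:ℝ)+1)^2 := by
  obtain ⟨C, hC0, hCg, hCG⟩ := exists_C hG
  have hg : ContDiff ℝ l (fun z : ℝ => z^2 * G z) := (contDiff_id.pow 2).mul hG
  have hapos : ∀ a : ℕ, (0:ℝ) < (a:ℝ)+1 := fun a => by positivity
  have ha1 : ∀ a : ℕ, (1:ℝ) ≤ (a:ℝ)+1 := fun a => by simp [Nat.cast_nonneg]
  have hsq : ∀ (a : ℕ) (y : ℝ), y ∈ U → (((a:ℝ)+1+y))⁻¹^2 ≤ 4 / ((a:ℝ)+1)^2 := by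
    intro a y hy
    have h1 := u_le (a := a) hy
    have h2 := (u_pos (a := a) hy).le
    calc (((a:ℝ)+1+y))⁻¹^2 ≤ (2/((a:ℝ)+1))^2 := pow_le_pow_left₀ h2 h1 2
      _ = 4 / ((a:ℝ)+1)^2 := by rw [div_pow]; norm_num
  intro i hi
  match i with
  | 0 =>
    refine ⟨4 * C, fun a y hy => ?_⟩
    rw [iteratedDerivWithin_zero]
    rw [norm_mul]
    calc ‖(((a:ℝ)+1+y))⁻¹^2‖ * ‖G ((((a:ℝ)+1+y))⁻¹)‖
        ≤ (4 / ((a:ℝ)+1)^2) * C := by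
          apply mul_le_mul _ (hCG _ (u_mem hy)) (norm_nonneg _) (by positivity)
          rw [norm_pow, Real.norm_eq_abs, abs_of_pos (u_pos hy)]
          exact hsq a y hy
      _ = 4 * C / ((a:ℝ)+1)^2 := by ring
  | 1 =>
    refine ⟨4 * C, fun a y hy => ?_⟩
    have hl1 : 1 ≤ l := hi
    have hu' : HasDerivAt (fun y : ℝ => (((a:ℝ)+1+y))⁻¹) (-1/(((a:ℝ)+1+y))^2) y := by
      convert ((hasDerivAt_id y).const_add ((a:ℝ)+1)).inv (u_ne hy) using 1 <;> rfl
    have hgd : Differentiable ℝ (fun z : ℝ => z^2 * G z) :=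
      hg.differentiable (by exact_mod_cast (show l ≠ 0 by omega))
    have hT' : HasDerivAt (fun y => ((((a:ℝ)+1+y))⁻¹)^2 * G ((((a:ℝ)+1+y))⁻¹))
        (deriv (fun z : ℝ => z^2 * G z) ((((a:ℝ)+1+y))⁻¹) * (-1/(((a:ℝ)+1+y))^2)) y := by
      simpa [Function.comp_def, inv_pow] using ((hgd _).hasDerivAt.comp y hu')
    rw [iteratedDerivWithin_one, derivWithin_of_isOpen hUopen hy, hT'.deriv]
    have hd1 : ‖deriv (fun z : ℝ => z^2 * G z) ((((a:ℝ)+1+y))⁻¹)‖ ≤ C := by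
      have := hCg 1 hl1 _ (u_mem (a := a) hy)
      rwa [norm_iteratedFDeriv_eq_norm_iteratedDeriv, iteratedDeriv_one] at this
    have hd2 : ‖-1/(((a:ℝ)+1+y))^2‖ ≤ 4 / ((a:ℝ)+1)^2 := by
      have hcy : (0:ℝ) < (a:ℝ)+1+y := lt_trans (by norm_num) (cy_pos (ha1 a) hy)
      rw [norm_div, norm_neg, norm_one, Real.norm_eq_abs, abs_of_pos (pow_pos hcy 2)]
      rw [one_div, ← one_div_one_div ((((a:ℝ)+1+y))^2), one_div_one_div]
      have : (((a:ℝ)+1+y)⁻¹)^2 ≤ 4 / ((a:ℝ)+1)^2 := hsq a y hy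
      calc ((((a:ℝ)+1+y))^2)⁻¹ = ((((a:ℝ)+1+y))⁻¹)^2 := by rw [inv_pow]
        _ ≤ 4 / ((a:ℝ)+1)^2 := hsq a y hy
    rw [norm_mul]
    calc ‖deriv (fun z : ℝ => z^2 * G z) ((((a:ℝ)+1+y))⁻¹)‖ * ‖-1/(((a:ℝ)+1+y))^2‖
        ≤ C * (4 / ((a:ℝ)+1)^2) :=
          mul_le_mul hd1 hd2 (norm_nonneg _) hC0
      _ = 4 * C / ((a:ℝ)+1)^2 := by ring
  | (j+2) =>
    set i := j + 2 with hidef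
    set c₀ : ℝ := (l.factorial : ℝ) * 2^(l+1) with hc₀
    refine ⟨(i.factorial : ℝ) * C * c₀^i, fun a y hy => ?_⟩
    have huc : ContDiffOn ℝ l (fun y : ℝ => (((a:ℝ)+1+y))⁻¹) U :=
      ((contDiff_const.add contDiff_id).contDiffOn).inv (fun y hy => u_ne hy)
    have hcomp : ‖iteratedFDerivWithin ℝ i
        ((fun z : ℝ => z^2 * G z) ∘ (fun y : ℝ => (((a:ℝ)+1+y))⁻¹)) U y‖
        ≤ (i.factorial : ℝ) * C * (c₀/((a:ℝ)+1))^i := by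
      apply norm_iteratedFDerivWithin_comp_le (hg.contDiffOn (s := Set.univ)) huc
        (by exact_mod_cast hi) uniqueDiffOn_univ hUu (Set.mapsTo_univ _ _) hy
      · intro m hm
        rw [iteratedFDerivWithin_univ]
        exact hCg m (le_trans hm hi) _ (u_mem hy)
      · intro m hm1 hmi
        exact uD hy hm1 (le_trans hmi hi)
    have heq : ‖iteratedDerivWithin i
        (fun y => ((((a:ℝ)+1+y))⁻¹)^2 * G ((((a:ℝ)+1+y))⁻¹)) U y‖
        = ‖iteratedFDerivWithin ℝ i
        ((fun z : ℝ => z^2 * G z) ∘ (fun y : ℝ => (((a:ℝ)+1+y))⁻¹)) U y‖ := by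
      rw [norm_iteratedFDerivWithin_eq_norm_iteratedDerivWithin]
      rfl
    rw [heq]
    refine hcomp.trans ?_
    have hc₀0 : (0:ℝ) ≤ c₀ := by positivity
    rw [div_pow]
    have h2i : ((a:ℝ)+1)^2 ≤ ((a:ℝ)+1)^i := pow_le_pow_right₀ (ha1 a) (by omega)
    calc (i.factorial : ℝ) * C * (c₀^i / ((a:ℝ)+1)^i)
        = ((i.factorial : ℝ) * C * c₀^i) / ((a:ℝ)+1)^i := by ring
      _ ≤ ((i.factorial : ℝ) * C * c₀^i) / ((a:ℝ)+1)^2 :=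
          div_le_div_of_nonneg_left (by positivity) (by positivity) h2i

end Bounds2

/-- Full pipeline for a series of the form `∑ (u a y)^2 * G (u a y)` with `u a y = (a+1+y)⁻¹`. -/
lemma pipeline (l : ℕ) (G : ℝ → ℝ) (hG : ContDiff ℝ l G) :
    TendstoUniformlyOn (fun (N : ℕ) (x : ℝ) => ∑ a ∈ Finset.range N,
        ((((a:ℝ)+1+x))⁻¹)^2 * G ((((a:ℝ)+1+x))⁻¹))
      (fun x => ∑' a : ℕ, ((((a:ℝ)+1+x))⁻¹)^2 * G ((((a:ℝ)+1+x))⁻¹)) atTop K ∧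
    ContDiffOn ℝ l (fun x => ∑' a : ℕ, ((((a:ℝ)+1+x))⁻¹)^2 * G ((((a:ℝ)+1+x))⁻¹)) K ∧
    (∀ i ≤ l, ∀ x ∈ K,
      iteratedDerivWithin i (fun x => ∑' a : ℕ, ((((a:ℝ)+1+x))⁻¹)^2 * G ((((a:ℝ)+1+x))⁻¹)) K x
        = ∑' a : ℕ, iteratedDerivWithin i
            (fun y => ((((a:ℝ)+1+y))⁻¹)^2 * G ((((a:ℝ)+1+y))⁻¹)) K x) ∧
    (∀ i ≤ l, TendstoUniformlyOn (fun (N : ℕ) (x : ℝ) => ∑ a ∈ Finset.range N,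
        iteratedDerivWithin i (fun y => ((((a:ℝ)+1+y))⁻¹)^2 * G ((((a:ℝ)+1+y))⁻¹)) K x)
      (iteratedDerivWithin i
        (fun x => ∑' a : ℕ, ((((a:ℝ)+1+x))⁻¹)^2 * G ((((a:ℝ)+1+x))⁻¹)) K) atTop K) := by
  set T : ℕ → ℝ → ℝ := fun a y => ((((a:ℝ)+1+y))⁻¹)^2 * G ((((a:ℝ)+1+y))⁻¹) with hT
  set h : ℕ → ℕ → ℝ → ℝ := fun i a => iteratedDerivWithin i (T a) U with hh
  set M : ℕ → ℝ := fun i => if hi : i ≤ l then (boundLemma hG i hi).choose else 0 with hM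
  have hb : ∀ i, i ≤ l → ∀ (a : ℕ), ∀ y ∈ U, ‖h i a y‖ ≤ M i / ((a:ℝ)+1)^2 := by
    intro i hi a y hy
    have := (boundLemma hG i hi).choose_spec a y hy
    simpa [hM, dif_pos hi, hh, hT] using this
  have hTcd : ∀ a : ℕ, ContDiffOn ℝ l (T a) U := fun a => hTc hG a
  have hd : ∀ i, i < l → ∀ (a : ℕ), ∀ y ∈ U, HasDerivAt (h i a) (h (i+1) a y) y := by
    intro i hi a y hy
    have hdw : DifferentiableWithinAt ℝ (h i a) U y :=
      (hTcd a).differentiableOn_iteratedDerivWithin (by exact_mod_cast hi) hUu y hy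
    have h2 := hdw.hasDerivWithinAt.hasDerivAt (hUopen.mem_nhds hy)
    rw [show h (i+1) a y = derivWithin (h i a) U y from congrFun iteratedDerivWithin_succ y]
    exact h2
  have hcont : ∀ i, i ≤ l → ∀ (a : ℕ), ContinuousOn (h i a) U :=
    fun i hi a => (hTcd a).continuousOn_iteratedDerivWithin (by exact_mod_cast hi) hUu
  obtain ⟨hS, hiter⟩ := keyInd l h M hb hd hcont
  have hh0 : (fun y => ∑' a, h 0 a y) = (fun y => ∑' a, T a y) := by
    funext y; exact tsum_congr fun a => by rw [hh]; simp
  rw [hh0] at hS hiter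
  have shrinkT : ∀ (a : ℕ) (i : ℕ), i ≤ l → ∀ x ∈ K,
      iteratedDerivWithin i (T a) K x = h i a x :=
    fun a i hi x hx => shrink (hTcd a) i hi x hx
  have shrinkS : ∀ (i : ℕ), i ≤ l → ∀ x ∈ K,
      iteratedDerivWithin i (fun y => ∑' a, T a y) K x = ∑' a, h i a x := by
    intro i hi x hx
    rw [shrink hS i hi x hx]
    exact hiter i hi x (hKU hx)
  have hunif : ∀ (i : ℕ), i ≤ l → TendstoUniformlyOn
      (fun (N : ℕ) (x : ℝ) => ∑ a ∈ Finset.range N, h i a x)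
      (fun x => ∑' a, h i a x) atTop K :=
    fun i hi => (tendstoUniformlyOn_tsum_nat (bound_summable (M i))
      (fun a x hx => hb i hi a x hx)).mono hKU
  refine ⟨?_, hS.mono hKU, ?_, ?_⟩
  · have h0 := hunif 0 (Nat.zero_le l)
    apply TendstoUniformlyOn.congr_right (TendstoUniformlyOn.congr h0 ?_) ?_
    · exact Filter.Eventually.of_forall fun N x hx =>
        Finset.sum_congr rfl fun a _ => by rw [hh]; simp [hT, inv_pow]
    · intro x hx
      exact tsum_congr fun a => by rw [hh]; simp [hT, inv_pow]
  · intro i hi x hx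
    rw [shrinkS i hi x hx]
    exact tsum_congr fun a => (shrinkT a i hi x hx).symm
  · intro i hi
    apply TendstoUniformlyOn.congr_right (TendstoUniformlyOn.congr (hunif i hi) ?_) ?_
    · exact Filter.Eventually.of_forall fun N x hx =>
        Finset.sum_congr rfl fun a _ => (shrinkT a i hi x hx).symm
    · exact fun x hx => (shrinkS i hi x hx).symm


/-- The Gauss transfer operator `(L₀ f)(x) = Σ_{a ≥ 1} (a+x)⁻² f(1/(a+x))`. -/
noncomputable def gaussOp (f : ℝ → ℝ) : ℝ → ℝ :=
  fun x => ∑' a : ℕ, (1 / (((a : ℝ) + 1) + x) ^ 2) * f (1 / (((a : ℝ) + 1) + x))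

/-- The Rényi transfer operator `(L₁ f)(x) = Σ_{a ≥ 1} (a+x)⁻² f(1 - 1/(a+x))`. -/
noncomputable def renyiOp (f : ℝ → ℝ) : ℝ → ℝ :=
  fun x => ∑' a : ℕ, (1 / (((a : ℝ) + 1) + x) ^ 2) * f (1 - 1 / (((a : ℝ) + 1) + x))

/-- **Regularity of the Gauss and Rényi transfer operators on `C^l([0,1])`**: the
defining series converge uniformly on `[0,1]`, the sums `L₀ f` and `L₁ f` are `C^l`
on `[0,1]`, and for every `i ≤ l` the `i`-th derivatives are obtained by termwise
differentiation, the differentiated series converging uniformly on `[0,1]`. -/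
theorem stmt10 (l : ℕ) (f : ℝ → ℝ) (hf : ContDiffOn ℝ l f (Set.Icc (0 : ℝ) 1)) :
    TendstoUniformlyOn
      (fun (N : ℕ) (x : ℝ) => ∑ a ∈ Finset.range N,
        (1 / (((a : ℝ) + 1) + x) ^ 2) * f (1 / (((a : ℝ) + 1) + x)))
      (gaussOp f) atTop (Set.Icc (0 : ℝ) 1) ∧
    TendstoUniformlyOn
      (fun (N : ℕ) (x : ℝ) => ∑ a ∈ Finset.range N,
        (1 / (((a : ℝ) + 1) + x) ^ 2) * f (1 - 1 / (((a : ℝ) + 1) + x)))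
      (renyiOp f) atTop (Set.Icc (0 : ℝ) 1) ∧
    ContDiffOn ℝ l (gaussOp f) (Set.Icc (0 : ℝ) 1) ∧
    ContDiffOn ℝ l (renyiOp f) (Set.Icc (0 : ℝ) 1) ∧
    (∀ i ≤ l, ∀ x ∈ Set.Icc (0 : ℝ) 1,
      iteratedDerivWithin i (gaussOp f) (Set.Icc (0 : ℝ) 1) x =
        ∑' a : ℕ, iteratedDerivWithin i
          (fun y => (1 / (((a : ℝ) + 1) + y) ^ 2) * f (1 / (((a : ℝ) + 1) + y)))
          (Set.Icc (0 : ℝ) 1) x) ∧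
    (∀ i ≤ l, ∀ x ∈ Set.Icc (0 : ℝ) 1,
      iteratedDerivWithin i (renyiOp f) (Set.Icc (0 : ℝ) 1) x =
        ∑' a : ℕ, iteratedDerivWithin i
          (fun y => (1 / (((a : ℝ) + 1) + y) ^ 2) * f (1 - 1 / (((a : ℝ) + 1) + y)))
          (Set.Icc (0 : ℝ) 1) x) ∧
    (∀ i ≤ l, TendstoUniformlyOn
      (fun (N : ℕ) (x : ℝ) => ∑ a ∈ Finset.range N,
        iteratedDerivWithin i
          (fun y => (1 / (((a : ℝ) + 1) + y) ^ 2) * f (1 / (((a : ℝ) + 1) + y)))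
          (Set.Icc (0 : ℝ) 1) x)
      (iteratedDerivWithin i (gaussOp f) (Set.Icc (0 : ℝ) 1)) atTop (Set.Icc (0 : ℝ) 1)) ∧
    (∀ i ≤ l, TendstoUniformlyOn
      (fun (N : ℕ) (x : ℝ) => ∑ a ∈ Finset.range N,
        iteratedDerivWithin i
          (fun y => (1 / (((a : ℝ) + 1) + y) ^ 2) * f (1 - 1 / (((a : ℝ) + 1) + y)))
          (Set.Icc (0 : ℝ) 1) x)
      (iteratedDerivWithin i (renyiOp f) (Set.Icc (0 : ℝ) 1)) atTop (Set.Icc (0 : ℝ) 1)) := by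
  obtain ⟨F, hF, hFf⟩ := exists_extension l f hf
  have hc1 : ∀ (a : ℕ) (x : ℝ), x ∈ K → (1:ℝ) ≤ (a:ℝ)+1+x := by
    intro a x hx
    have := hx.1
    have h2 : (0:ℝ) ≤ a := Nat.cast_nonneg a
    linarith
  have hmem1 : ∀ (a : ℕ) (x : ℝ), x ∈ K → (((a:ℝ)+1+x))⁻¹ ∈ K := by
    intro a x hx
    have h1 := hc1 a x hx
    exact ⟨inv_nonneg.mpr (by linarith), inv_le_one_of_one_le₀ h1⟩
  have hmem2 : ∀ (a : ℕ) (x : ℝ), x ∈ K → 1 - (((a:ℝ)+1+x))⁻¹ ∈ K := by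
    intro a x hx
    obtain ⟨m1, m2⟩ := hmem1 a x hx
    exact ⟨by linarith, by linarith⟩
  have te1 : ∀ a : ℕ, Set.EqOn
      (fun x => (1 / (((a : ℝ) + 1) + x) ^ 2) * f (1 / (((a : ℝ) + 1) + x)))
      (fun x => ((((a:ℝ)+1+x))⁻¹)^2 * F ((((a:ℝ)+1+x))⁻¹)) K := by
    intro a x hx
    simp only [one_div]
    rw [← inv_pow, hFf (hmem1 a x hx)]
  have te2 : ∀ a : ℕ, Set.EqOn
      (fun x => (1 / (((a : ℝ) + 1) + x) ^ 2) * f (1 - 1 / (((a : ℝ) + 1) + x)))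
      (fun x => ((((a:ℝ)+1+x))⁻¹)^2 * (fun z => F (1 - z)) ((((a:ℝ)+1+x))⁻¹)) K := by
    intro a x hx
    simp only [one_div]
    rw [← inv_pow, hFf (hmem2 a x hx)]
  obtain ⟨u1, c1, d1, v1⟩ := pipeline l F hF
  obtain ⟨u2, c2, d2, v2⟩ := pipeline l (fun z => F (1 - z))
    (hF.comp (contDiff_const.sub contDiff_id))
  have se1 : Set.EqOn (gaussOp f)
      (fun x => ∑' a : ℕ, ((((a:ℝ)+1+x))⁻¹)^2 * F ((((a:ℝ)+1+x))⁻¹)) K :=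
    fun x hx => tsum_congr fun a => te1 a hx
  have se2 : Set.EqOn (renyiOp f)
      (fun x => ∑' a : ℕ, ((((a:ℝ)+1+x))⁻¹)^2 * (fun z => F (1 - z)) ((((a:ℝ)+1+x))⁻¹)) K :=
    fun x hx => tsum_congr fun a => te2 a hx
  refine ⟨?_, ?_, c1.congr se1, c2.congr se2, ?_, ?_, ?_, ?_⟩
  · exact (u1.congr (Filter.Eventually.of_forall fun N x hx =>
      Finset.sum_congr rfl fun a _ => (te1 a hx).symm)).congr_right
      (fun x hx => (se1 hx).symm)
  · exact (u2.congr (Filter.Eventually.of_forall fun N x hx =>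
      Finset.sum_congr rfl fun a _ => (te2 a hx).symm)).congr_right
      (fun x hx => (se2 hx).symm)
  · intro i hi x hx
    calc iteratedDerivWithin i (gaussOp f) K x
        = iteratedDerivWithin i
          (fun x => ∑' a : ℕ, ((((a:ℝ)+1+x))⁻¹)^2 * F ((((a:ℝ)+1+x))⁻¹)) K x :=
          iteratedDerivWithin_congr se1 hx
      _ = ∑' a : ℕ, iteratedDerivWithin i
          (fun y => ((((a:ℝ)+1+y))⁻¹)^2 * F ((((a:ℝ)+1+y))⁻¹)) K x := d1 i hi x hx
      _ = _ := tsum_congr fun a => (iteratedDerivWithin_congr (te1 a) hx).symm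
  · intro i hi x hx
    calc iteratedDerivWithin i (renyiOp f) K x
        = iteratedDerivWithin i
          (fun x => ∑' a : ℕ, ((((a:ℝ)+1+x))⁻¹)^2 * (fun z => F (1 - z)) ((((a:ℝ)+1+x))⁻¹)) K x :=
          iteratedDerivWithin_congr se2 hx
      _ = ∑' a : ℕ, iteratedDerivWithin i
          (fun y => ((((a:ℝ)+1+y))⁻¹)^2 * (fun z => F (1 - z)) ((((a:ℝ)+1+y))⁻¹)) K x :=
          d2 i hi x hx
      _ = _ := tsum_congr fun a => (iteratedDerivWithin_congr (te2 a) hx).symm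
  · intro i hi
    exact ((v1 i hi).congr (Filter.Eventually.of_forall fun N x hx =>
      Finset.sum_congr rfl fun a _ =>
        (iteratedDerivWithin_congr (te1 a) hx).symm)).congr_right
      (fun x hx => (iteratedDerivWithin_congr se1 hx).symm)
  · intro i hi
    exact ((v2 i hi).congr (Filter.Eventually.of_forall fun N x hx =>
      Finset.sum_congr rfl fun a _ =>
        (iteratedDerivWithin_congr (te2 a) hx).symm)).congr_right
      (fun x hx => (iteratedDerivWithin_congr se2 hx).symm)
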